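/- Let S be a finite crossing-free set of pairs of natural numbers. Then there exists a list enumerating the elements of S without repetition such that the list of first coordinates is sorted in nondecreasing order and the list of second coordinates is also sorted in nondecreasing order. -/

import Mathlib

/-- A set `S` of pairs of natural numbers is crossing-free if there do not
exist pairs `(a,b) ∈ S` and `(c,d) ∈ S` with `a < c` and `d < b`. -/
def CrossingFree (S : Set (ℕ × ℕ)) : Prop :=
  ¬ ∃ a b c d, (a, b) ∈ S ∧ (c, d) ∈ S ∧ a < c ∧ d < b

private def rLex (p q : ℕ × ℕ) : Prop :=
  p.1 < q.1 ∨ (p.1 = q.1 ∧ p.2 ≤ q.2)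

private instance : DecidableRel rLex := fun p q => by unfold rLex; infer_instance

private instance : IsTotal (ℕ × ℕ) rLex :=
  ⟨fun p q => by rcases lt_trichotomy p.1 q.1 with h | h | h
                 · exact Or.inl (Or.inl h)
                 · rcases le_total p.2 q.2 with h2 | h2
                   · exact Or.inl (Or.inr ⟨h, h2⟩)
                   · exact Or.inr (Or.inr ⟨h.symm, h2⟩)
                 · exact Or.inr (Or.inl h)⟩

private instance : IsTrans (ℕ × ℕ) rLex :=
  ⟨fun p q r hpq hqr => by
    rcases hpq with h | ⟨h1, h2⟩ <;> rcases hqr with h' | ⟨h1', h2'⟩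
    · exact Or.inl (h.trans h')
    · exact Or.inl (h1' ▸ h)
    · exact Or.inl (h1 ▸ h')
    · exact Or.inr ⟨h1.trans h1', h2.trans h2'⟩⟩

private instance : IsAntisymm (ℕ × ℕ) rLex :=
  ⟨fun p q hpq hqp => by
    rcases hpq with h | ⟨h1, h2⟩ <;> rcases hqp with h' | ⟨h1', h2'⟩
    · exact absurd (h.trans h') (lt_irrefl _)
    · exact absurd h (h1' ▸ lt_irrefl _)
    · exact absurd h' (h1 ▸ lt_irrefl _)
    · exact Prod.ext h1 (le_antisymm h2 h2')⟩

/-- A finite crossing-free set can be enumerated without repetition so that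
both the list of first coordinates and the list of second coordinates are
sorted in nondecreasing order. -/
theorem exists_simultaneously_sorted_enumeration (S : Set (ℕ × ℕ))
    (hfin : S.Finite) (hcf : CrossingFree S) :
    ∃ l : List (ℕ × ℕ), l.Nodup ∧ (∀ p, p ∈ l ↔ p ∈ S) ∧
      (l.map Prod.fst).Pairwise (· ≤ ·) ∧ (l.map Prod.snd).Pairwise (· ≤ ·) := by
  classical
  set l := hfin.toFinset.sort rLex with hl
  have hmem : ∀ p, p ∈ l ↔ p ∈ S := by
    intro p; rw [hl, Finset.mem_sort, Set.Finite.mem_toFinset]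
  have hsorted : l.Pairwise rLex := Finset.pairwise_sort _ _
  refine ⟨l, Finset.sort_nodup _ _, hmem, ?_, ?_⟩
  · exact List.Pairwise.map _ (fun p q h => by
      rcases h with h | ⟨h1, _⟩; exacts [h.le, h1.le]) hsorted
  · have h2 : l.Pairwise (fun p q : ℕ × ℕ => p.2 ≤ q.2) := by
      refine hsorted.imp_of_mem ?_
      intro p q hp hq h
      rcases h with h | ⟨_, h2⟩
      · by_contra hlt
        exact hcf ⟨p.1, p.2, q.1, q.2, (hmem p).1 hp, (hmem q).1 hq, h, lt_of_not_ge hlt⟩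
      · exact h2
    exact List.Pairwise.map _ (fun p q h => h) h2
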